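/- For a finite polyhedral cell complex with a total ordering on cells inducing a discrete gradient vector field (pairing a cell f with a cell g exactly when f is the greatest face of g and g is the least coface of f), suppose for each critical (unpaired) cell e there is a cellular cycle z(e) in which e appears with coefficient ±1 and is the greatest cell appearing with nonzero coefficient. Then the homology classes of the cycles z(e) form a ℤ-basis of the cellular homology of the complex. -/

import Mathlib

/-!
Abstract setting for Lemma `lem-max-basis`: a finite polyhedral cell complex is encoded by
a finite linearly ordered set `ι` of cells with a grading `deg`, and a boundary operator
`d` on cellular chains `ι →₀ ℤ` with `d ∘ d = 0`, lowering degree by one, and with all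
incidence coefficients in `{−1, 0, 1}` (polyhedrality).  The total order induces a
discrete gradient vector field: `f` is matched with `g` iff `f` is the greatest face of
`g` and `g` is the least coface of `f`; critical cells are the unmatched ones.
-/

open Finset

lemma triang_zero {ι : Type} [Fintype ι] [LinearOrder ι] {κ : Type} [Fintype κ]
    (w : κ → (ι →₀ ℤ)) (L : κ → ι) (hL : Function.Injective L)
    (h1 : ∀ k, w k (L k) ≠ 0) (h2 : ∀ k j, w k j ≠ 0 → j ≤ L k)
    (a : κ → ℤ) (h : ∑ k, a k • w k = 0) : ∀ k, a k = 0 := by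
  classical
  by_contra hcon
  push_neg at hcon
  obtain ⟨k0, hk0⟩ := hcon
  obtain ⟨k1, hk1mem, hk1max⟩ :=
    (Finset.univ.filter (fun k => a k ≠ 0)).exists_max_image L ⟨k0, by simp [hk0]⟩
  have hak1 : a k1 ≠ 0 := by simpa using hk1mem
  have hval : (∑ k, a k • w k) (L k1) = a k1 * w k1 (L k1) := by
    rw [Finsupp.finset_sum_apply]
    rw [Finset.sum_eq_single k1]
    · simp
    · intro k _ hne
      by_cases hak : a k = 0
      · simp [hak]
      · have hwk : w k (L k1) = 0 := by
          by_contra hw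
          have h3 := h2 k _ hw
          have h4 := hk1max k (by simp [hak])
          exact hne (hL (le_antisymm h4 h3))
        simp [hwk]
    · simp
  rw [h] at hval
  have : a k1 * w k1 (L k1) = 0 := by simpa using hval.symm
  rcases mul_eq_zero.mp this with h' | h'
  · exact hak1 h'
  · exact h1 k1 h'

lemma triang_span {ι : Type} [Fintype ι] [LinearOrder ι]
    (β : ι → (ι →₀ ℤ))
    (h1 : ∀ i, β i i = 1 ∨ β i i = -1)
    (h2 : ∀ i j, β i j ≠ 0 → j ≤ i) :
    ∀ c : ι →₀ ℤ, ∃ a : ι → ℤ, c = ∑ i, a i • β i := by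
  classical
  suffices H : ∀ m : ι, ∀ c : ι →₀ ℤ, (∀ i ∈ c.support, i ≤ m) →
      ∃ a : ι → ℤ, c = ∑ i, a i • β i by
    intro c
    rcases c.support.eq_empty_or_nonempty with he | hne
    · exact ⟨0, by simp [Finsupp.support_eq_empty.mp he]⟩
    · exact H (c.support.max' hne) c (fun i hi => Finset.le_max' _ i hi)
  intro m
  induction m using WellFoundedLT.induction with
  | _ m IH =>
    intro c hc
    rcases c.support.eq_empty_or_nonempty with he | hne
    · exact ⟨0, by simp [Finsupp.support_eq_empty.mp he]⟩
    set m0 := c.support.max' hne with hm0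
    have hm0m : m0 ≤ m := hc _ (c.support.max'_mem hne)
    set s : ℤ := c m0 * β m0 m0 with hs
    set c' := c - s • β m0 with hc'
    have hsolve : s * β m0 m0 = c m0 := by
      rcases h1 m0 with h | h <;> rw [hs, h] <;> ring
    have hc'm0 : c' m0 = 0 := by
      rw [hc', Finsupp.sub_apply, Finsupp.smul_apply, smul_eq_mul, hsolve, sub_self]
    have hc'lt : ∀ i ∈ c'.support, i < m0 := by
      intro i hi
      have hne0 : c' i ≠ 0 := Finsupp.mem_support_iff.mp hi
      have hle : i ≤ m0 := by
        by_contra hgt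
        push_neg at hgt
        have h3 : c i = 0 := by
          by_contra h4
          exact absurd (Finset.le_max' _ i (Finsupp.mem_support_iff.mpr h4)) (not_le.mpr hgt)
        have h5 : β m0 i = 0 := by
          by_contra h6
          exact absurd (h2 m0 i h6) (not_le.mpr hgt)
        rw [hc', Finsupp.sub_apply, Finsupp.smul_apply, h3, h5] at hne0
        simp at hne0
      rcases lt_or_eq_of_le hle with h | h
      · exact h
      · rw [h] at hne0; exact absurd hc'm0 hne0
    have hdec : ∃ a' : ι → ℤ, c' = ∑ i, a' i • β i := by
      rcases c'.support.eq_empty_or_nonempty with he' | hne'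
      · exact ⟨0, by simp [Finsupp.support_eq_empty.mp he']⟩
      · have hmax' := c'.support.max'_mem hne'
        exact IH (c'.support.max' hne') (lt_of_lt_of_le (hc'lt _ hmax') hm0m)
          c' (fun i hi => Finset.le_max' _ i hi)
    obtain ⟨a', ha'⟩ := hdec
    refine ⟨fun i => a' i + if i = m0 then s else 0, ?_⟩
    have hcc : c = c' + s • β m0 := by rw [hc']; abel
    have hsum : (∑ i, (a' i + if i = m0 then s else 0) • β i)
        = (∑ i, a' i • β i) + ∑ i, (if i = m0 then s • β i else (0 : ι →₀ ℤ)) := by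
      rw [← Finset.sum_add_distrib]
      refine Finset.sum_congr rfl fun i _ => ?_
      rw [add_smul]
      congr 1
      split <;> simp
    rw [hsum, Finset.sum_ite_eq' Finset.univ m0 (fun i => s • β i)]
    simp [← ha', hcc]

/-- `f` is a face of `g` (nonzero incidence coefficient). -/
def IsFace (d : ((ι : Type) →₀ ℤ) →ₗ[ℤ] (ι →₀ ℤ)) (g f : ι) : Prop :=
  d (Finsupp.single g 1) f ≠ 0

/-- `f` is matched with `g` by the order-induced discrete vector field:
`f` is the greatest face of `g` and `g` is the least coface of `f`. -/
def Matched {ι : Type} [LinearOrder ι] (d : (ι →₀ ℤ) →ₗ[ℤ] (ι →₀ ℤ)) (f g : ι) : Prop :=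
  IsFace d g f ∧ (∀ f', IsFace d g f' → f' ≤ f) ∧ ∀ g', IsFace d g' f → g ≤ g'

/-- A cell is critical if it is matched with no other cell. -/
def Critical {ι : Type} [LinearOrder ι] (d : (ι →₀ ℤ) →ₗ[ℤ] (ι →₀ ℤ)) (e : ι) : Prop :=
  (¬ ∃ g, Matched d e g) ∧ ¬ ∃ f, Matched d f e

open Classical in
/-- Triangular family of chains associated to the order-induced matching. -/
noncomputable def morseBeta {ι : Type} [LinearOrder ι]
    (d : (ι →₀ ℤ) →ₗ[ℤ] (ι →₀ ℤ)) (z : ι → (ι →₀ ℤ)) (e : ι) : ι →₀ ℤ :=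
  if _ : ∃ f, Matched d f e then Finsupp.single e 1
  else if h : ∃ g, Matched d e g then d (Finsupp.single h.choose 1)
  else z e

lemma morseBeta_upper {ι : Type} [LinearOrder ι]
    (d : (ι →₀ ℤ) →ₗ[ℤ] (ι →₀ ℤ)) (z : ι → (ι →₀ ℤ)) {e : ι}
    (h : ∃ f, Matched d f e) : morseBeta d z e = Finsupp.single e 1 := by
  rw [morseBeta, dif_pos h]

lemma morseBeta_lower {ι : Type} [LinearOrder ι]
    (d : (ι →₀ ℤ) →ₗ[ℤ] (ι →₀ ℤ)) (z : ι → (ι →₀ ℤ)) {e : ι}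
    (hu : ¬ ∃ f, Matched d f e) (hl : ∃ g, Matched d e g) :
    morseBeta d z e = d (Finsupp.single hl.choose 1) := by
  rw [morseBeta, dif_neg hu, dif_pos hl]

lemma morseBeta_crit {ι : Type} [LinearOrder ι]
    (d : (ι →₀ ℤ) →ₗ[ℤ] (ι →₀ ℤ)) (z : ι → (ι →₀ ℤ)) {e : ι}
    (hu : ¬ ∃ f, Matched d f e) (hl : ¬ ∃ g, Matched d e g) :
    morseBeta d z e = z e := by
  rw [morseBeta, dif_neg hu, dif_neg hl]

/-- if for each critical cell `e` there is a cycle `z e` in which `e` appears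
with coefficient `±1` and is the greatest cell appearing with nonzero coefficient, then
the classes of the `z e` form a ℤ-basis of homology: every cycle is, uniquely up to
boundaries, a ℤ-linear combination of the `z e`. -/
theorem discrete_morse_max_basis {ι : Type} [Fintype ι] [LinearOrder ι]
    (deg : ι → ℕ) (d : (ι →₀ ℤ) →ₗ[ℤ] (ι →₀ ℤ))
    (hdd : ∀ c, d (d c) = 0)
    (hdeg : ∀ e i, d (Finsupp.single e 1) i ≠ 0 → deg i + 1 = deg e)
    (hpoly : ∀ e i, d (Finsupp.single e 1) i = 1 ∨ d (Finsupp.single e 1) i = -1 ∨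
      d (Finsupp.single e 1) i = 0)
    (z : ι → (ι →₀ ℤ))
    (hz : ∀ e, Critical d e →
      d (z e) = 0 ∧ (z e e = 1 ∨ z e e = -1) ∧ (∀ i, z e i ≠ 0 → i ≤ e) ∧
        ∀ i, z e i ≠ 0 → deg i = deg e) :
    ∀ c : ι →₀ ℤ, d c = 0 →
      ∃! lam : ι → ℤ, (∀ e, ¬ Critical d e → lam e = 0) ∧
        (c - ∑ e : ι, lam e • z e) ∈ LinearMap.range d := by

  classical
  have hβ1 : ∀ i, morseBeta d z i i = 1 ∨ morseBeta d z i i = -1 := by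
    intro i
    by_cases hu : ∃ f, Matched d f i
    · left; rw [morseBeta_upper d z hu]; simp
    · by_cases hl : ∃ g, Matched d i g
      · rw [morseBeta_lower d z hu hl]
        have hface : IsFace d hl.choose i := hl.choose_spec.1
        rcases hpoly hl.choose i with h | h | h
        · left; exact h
        · right; exact h
        · exact absurd h hface
      · rw [morseBeta_crit d z hu hl]
        exact (hz i ⟨hl, hu⟩).2.1
  have hβ2 : ∀ i j, morseBeta d z i j ≠ 0 → j ≤ i := by
    intro i j hj
    by_cases hu : ∃ f, Matched d f i
    · rw [morseBeta_upper d z hu] at hj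
      have : j = i := by
        by_contra hne
        exact hj (Finsupp.single_eq_of_ne hne)
      exact le_of_eq this
    · by_cases hl : ∃ g, Matched d i g
      · rw [morseBeta_lower d z hu hl] at hj
        exact hl.choose_spec.2.1 j hj
      · rw [morseBeta_crit d z hu hl] at hj
        exact (hz i ⟨hl, hu⟩).2.2.1 j hj
  intro c hcyc
  obtain ⟨a, ha⟩ := triang_span (morseBeta d z) hβ1 hβ2 c
  set U : Finset ι := Finset.univ.filter (fun i => ∃ f, Matched d f i) with hU
  have hvan2 : ∀ (v : ι → ℤ), ∀ i, i ∉ U → v i • d (morseBeta d z i) = 0 := by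
    intro v i hi
    have hu : ¬ ∃ f, Matched d f i := by simpa [hU] using hi
    by_cases hl : ∃ g, Matched d i g
    · rw [morseBeta_lower d z hu hl, hdd, smul_zero]
    · rw [morseBeta_crit d z hu hl, (hz i ⟨hl, hu⟩).1, smul_zero]
  -- rewriting a boundary of a combination as a subtype sum over upper cells
  have hkey : ∀ (v : ι → ℤ),
      d (∑ i, v i • morseBeta d z i)
        = ∑ k : {i : ι // ∃ f, Matched d f i}, v k.1 • d (Finsupp.single k.1 1) := by
    intro v
    have e0 : d (∑ i, v i • morseBeta d z i) = ∑ i, v i • d (morseBeta d z i) := by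
      rw [map_sum]
      exact Finset.sum_congr rfl fun i _ => map_smul d _ _
    have e1 : ∑ i, v i • d (morseBeta d z i) = ∑ i ∈ U, v i • d (morseBeta d z i) :=
      (Finset.sum_subset (Finset.subset_univ U) (fun x _ hx => hvan2 v x hx)).symm
    have e2 : ∑ i ∈ U, v i • d (morseBeta d z i)
        = ∑ i ∈ U, v i • d (Finsupp.single i 1) := by
      refine Finset.sum_congr rfl fun i hi => ?_
      have hup : ∃ f, Matched d f i := by simpa [hU] using hi
      rw [morseBeta_upper d z hup]
    have e3 : ∑ i ∈ U, v i • d (Finsupp.single i 1)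
        = ∑ k : {i : ι // ∃ f, Matched d f i}, v k.1 • d (Finsupp.single k.1 1) :=
      Finset.sum_subtype U (by intro x; simp [hU]) (fun i => v i • d (Finsupp.single i 1))
    rw [e0, e1, e2, e3]
  -- triangularity data for the upper boundaries
  have hw1 : ∀ k : {i : ι // ∃ f, Matched d f i},
      d (Finsupp.single k.1 1) (k.2.choose) ≠ 0 := fun k => k.2.choose_spec.1
  have hw2 : ∀ (k : {i : ι // ∃ f, Matched d f i}) j,
      d (Finsupp.single k.1 1) j ≠ 0 → j ≤ k.2.choose := fun k j hj =>
    k.2.choose_spec.2.1 j hj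
  have hLinj : Function.Injective (fun k : {i : ι // ∃ f, Matched d f i} => k.2.choose) := by
    intro k k' hkk'
    replace hkk' : k.2.choose = k'.2.choose := hkk'
    have h1 : IsFace d k'.1 k.2.choose := by
      rw [hkk']; exact k'.2.choose_spec.1
    have h2 : IsFace d k.1 k'.2.choose := by
      rw [← hkk']; exact k.2.choose_spec.1
    have le1 : k.1 ≤ k'.1 := k.2.choose_spec.2.2 k'.1 h1
    have le2 : k'.1 ≤ k.1 := k'.2.choose_spec.2.2 k.1 h2
    exact Subtype.ext (le_antisymm le1 le2)
  -- the coefficients of upper cells in a cycle vanish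
  have hsub : ∑ k : {i : ι // ∃ f, Matched d f i}, a k.1 • d (Finsupp.single k.1 1) = 0 := by
    rw [← hkey a, ← ha, hcyc]
  have haU : ∀ i, (∃ f, Matched d f i) → a i = 0 := by
    intro i hi
    exact triang_zero _ _ hLinj hw1 hw2 _ hsub ⟨i, hi⟩
  -- candidate coefficients
  set lam : ι → ℤ := fun e => if Critical d e then a e else 0 with hlam
  have hlam_crit : ∀ e, Critical d e → lam e = a e := fun e he => if_pos he
  have hlam_ncrit : ∀ e, ¬ Critical d e → lam e = 0 := fun e he => if_neg he
  set u : ι → (ι →₀ ℤ) := fun i =>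
    if _ : ∃ f, Matched d f i then 0
    else if h : ∃ g, Matched d i g then a i • Finsupp.single h.choose 1 else 0 with hu_def
  have hterm : ∀ i, a i • morseBeta d z i - lam i • z i = d (u i) := by
    intro i
    by_cases hup : ∃ f, Matched d f i
    · have ha0 : a i = 0 := haU i hup
      have hnc : ¬ Critical d i := fun hcr => hcr.2 hup
      rw [hlam_ncrit i hnc, hu_def]
      simp [hup, ha0]
    · by_cases hl : ∃ g, Matched d i g
      · have hnc : ¬ Critical d i := fun hcr => hcr.1 hl
        rw [hlam_ncrit i hnc, morseBeta_lower d z hup hl, hu_def]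
        simp only [dif_neg hup, dif_pos hl]
        rw [map_smul]
        simp
      · have hcr : Critical d i := ⟨hl, hup⟩
        rw [hlam_crit i hcr, morseBeta_crit d z hup hl, hu_def]
        simp [hup, hl]
  have hmem : (c - ∑ e : ι, lam e • z e) ∈ LinearMap.range d := by
    refine ⟨∑ i, u i, ?_⟩
    rw [map_sum, ha, ← Finset.sum_sub_distrib]
    exact Finset.sum_congr rfl fun i _ => (hterm i).symm
  refine ⟨lam, ⟨hlam_ncrit, hmem⟩, ?_⟩
  -- uniqueness
  rintro lam' ⟨hvan', hmem'⟩
  set μ : ι → ℤ := fun e => lam' e - lam e with hμ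
  have hμ0 : ∀ e, ¬ Critical d e → μ e = 0 := by
    intro e he
    show lam' e - lam e = 0
    rw [hvan' e he, hlam_ncrit e he, sub_zero]
  have hμmem : (∑ e : ι, μ e • z e) ∈ LinearMap.range d := by
    have heq : (∑ e : ι, μ e • z e)
        = (∑ e : ι, lam' e • z e) - (∑ e : ι, lam e • z e) := by
      rw [← Finset.sum_sub_distrib]
      refine Finset.sum_congr rfl fun e _ => ?_
      show (lam' e - lam e) • z e = lam' e • z e - lam e • z e
      rw [sub_smul]
    have heq2 : (∑ e : ι, lam' e • z e) - (∑ e : ι, lam e • z e)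
        = (c - ∑ e : ι, lam e • z e) - (c - ∑ e : ι, lam' e • z e) := by abel
    rw [heq, heq2]
    exact Submodule.sub_mem _ hmem hmem'
  obtain ⟨b, hb⟩ := hμmem
  obtain ⟨a', ha'⟩ := triang_span (morseBeta d z) hβ1 hβ2 b
  have hdb : ∑ k : {i : ι // ∃ f, Matched d f i}, a' k.1 • d (Finsupp.single k.1 1)
      = ∑ e : ι, μ e • z e := by
    rw [← hkey a', ← ha', hb]
  -- the sum of μ • z over critical cells
  have hμsum : ∑ k : {e : ι // Critical d e}, μ k.1 • z k.1 = ∑ e : ι, μ e • z e := by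
    rw [← Finset.sum_subtype (Finset.univ.filter (fun e => Critical d e))
      (by intro x; simp) (fun e => μ e • z e)]
    exact Finset.sum_subset (Finset.subset_univ _) (fun x _ hx => by
      have hnc : ¬ Critical d x := by simpa using hx
      rw [hμ0 x hnc, zero_smul])
  -- combined triangular family
  set W : ({e : ι // Critical d e} ⊕ {i : ι // ∃ f, Matched d f i}) → (ι →₀ ℤ) :=
    Sum.elim (fun k => z k.1) (fun k => d (Finsupp.single k.1 1)) with hW
  set L₂ : ({e : ι // Critical d e} ⊕ {i : ι // ∃ f, Matched d f i}) → ι :=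
    Sum.elim (fun k => k.1) (fun k => k.2.choose) with hL₂
  set aa : ({e : ι // Critical d e} ⊕ {i : ι // ∃ f, Matched d f i}) → ℤ :=
    Sum.elim (fun k => μ k.1) (fun k => -(a' k.1)) with haa
  have hsum2 : ∑ k, aa k • W k = 0 := by
    rw [Fintype.sum_sum_type]
    simp only [hW, haa, Sum.elim_inl, Sum.elim_inr, neg_smul]
    rw [Finset.sum_neg_distrib, hdb, hμsum]
    simp
  have hL₂inj : Function.Injective L₂ := by
    intro x y hxy
    match x, y with
    | Sum.inl e, Sum.inl e' =>
      exact congrArg Sum.inl (Subtype.ext hxy)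
    | Sum.inr k, Sum.inr k' =>
      exact congrArg Sum.inr (hLinj hxy)
    | Sum.inl e, Sum.inr k =>
      exfalso
      have hfe : e.1 = k.2.choose := hxy
      exact e.2.1 ⟨k.1, hfe ▸ k.2.choose_spec⟩
    | Sum.inr k, Sum.inl e =>
      exfalso
      have hfe : e.1 = k.2.choose := hxy.symm
      exact e.2.1 ⟨k.1, hfe ▸ k.2.choose_spec⟩
  have hW1 : ∀ k, W k (L₂ k) ≠ 0 := by
    rintro (e | k)
    · simp only [hW, hL₂, Sum.elim_inl]
      rcases (hz e.1 e.2).2.1 with h | h <;> rw [h] <;> simp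
    · exact hw1 k
  have hW2 : ∀ k j, W k j ≠ 0 → j ≤ L₂ k := by
    rintro (e | k) j hj
    · exact (hz e.1 e.2).2.2.1 j hj
    · exact hw2 k j hj
  have hall := triang_zero W L₂ hL₂inj hW1 hW2 aa hsum2
  funext e
  by_cases hcr : Critical d e
  · have := hall (Sum.inl ⟨e, hcr⟩)
    have hμe : μ e = 0 := this
    have : lam' e - lam e = 0 := hμe
    linarith [this]
  · rw [hvan' e hcr, hlam_ncrit e hcr]
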